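/- Let (G, B₁, B₂) be a Rota-Baxter system of groups with descendent operation ∘ and cocycle Φ(a) = B₁(a)B₂(a). Then (G, ∘) is a group if and only if Φ is bijective. -/
import Mathlib


theorem stmt_13 {G : Type*} [Group G] (B₁ B₂ : G → G)
    (h1 : ∀ a b : G, B₁ a * B₁ b = B₁ (B₁ a * b * B₂ a))
    (h2 : ∀ a b : G, B₂ b * B₂ a = B₂ (B₁ a * b * B₂ a))
    (circ : G → G → G) (hcirc : ∀ a b, circ a b = B₁ a * b * B₂ a)
    (Φ : G → G) (hΦ : ∀ a, Φ a = B₁ a * B₂ a) :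
    ((∀ a b c : G, circ (circ a b) c = circ a (circ b c)) ∧
     ∃ e : G, (∀ a : G, circ e a = a ∧ circ a e = a) ∧
       ∀ a : G, ∃ b : G, circ a b = e ∧ circ b a = e) ↔
    Function.Bijective Φ := by
  have key : ∀ a c : G, Φ (circ a c) = circ a (Φ c) := by
    intro a c
    simp only [hcirc, hΦ, ← h1, ← h2]
    group
  have hΦ1 : ∀ a, Φ a = circ a 1 := by intro a; rw [hcirc, hΦ, mul_one]
  have hassoc : ∀ a b c : G, circ (circ a b) c = circ a (circ b c) := by
    intro a b c
    simp only [hcirc, ← h1, ← h2]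
    group
  constructor
  · rintro ⟨_, e, hid, hinv⟩
    obtain ⟨b, hb1, hb2⟩ := hinv 1
    constructor
    · intro x y h
      have h' : circ x 1 = circ y 1 := by rw [← hΦ1, ← hΦ1, h]
      calc x = circ x e := ((hid x).2).symm
        _ = circ (circ x 1) b := by rw [hassoc, hb1]
        _ = circ (circ y 1) b := by rw [h']
        _ = circ y e := by rw [hassoc, hb1]
        _ = y := (hid y).2
    · intro c
      exact ⟨circ c b, by rw [hΦ1, hassoc, hb2, (hid c).2]⟩
  · rintro ⟨hinj, hsurj⟩
    obtain ⟨e, he⟩ := hsurj 1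
    have hre : ∀ a, circ a e = a := by
      intro a
      apply hinj
      rw [key, he, ← hΦ1]
    have hsolve : ∀ a y : G, ∃ x, circ a x = y := by
      intro a y
      exact ⟨(B₁ a)⁻¹ * y * (B₂ a)⁻¹, by rw [hcirc]; group⟩
    refine ⟨hassoc, e, ?_, ?_⟩
    · intro a
      obtain ⟨b, hb⟩ := hsolve a e
      obtain ⟨c, hc⟩ := hsolve b e
      have ha : a = circ e c := by rw [← hb, hassoc, hc, hre]
      have hba : circ b a = e := by rw [ha, ← hassoc, hre, hc]
      exact ⟨by rw [← hb, hassoc, hba, hre], hre a⟩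
    · intro a
      obtain ⟨b, hb⟩ := hsolve a e
      obtain ⟨c, hc⟩ := hsolve b e
      have ha : a = circ e c := by rw [← hb, hassoc, hc, hre]
      have hba : circ b a = e := by rw [ha, ← hassoc, hre, hc]
      exact ⟨b, hb, hba⟩
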